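/- Let C_2 be a cyclic group of order two acting trivially on the integers ℤ. Then for every odd natural number n ≥ 1, the group homology H_n(C_2, ℤ) is isomorphic to ℤ/2, and for every even natural number n ≥ 2, the group homology H_n(C_2, ℤ) is the zero group. -/

import Mathlib

open CategoryTheory

set_option maxHeartbeats 1600000

noncomputable section

/-- `C₂`, a cyclic group of order two. -/
abbrev C2 : Type := Multiplicative (ZMod 2)

/-- The integral group ring `ℤ[C₂]`. -/
abbrev ZC2 : Type := MonoidAlgebra ℤ C2

/-- The augmentation `ℤ[C₂] → ℤ`, corresponding to the trivial action of `C₂` on `ℤ`. -/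
def augmentation : ZC2 →ₐ[ℤ] ℤ :=
  MonoidAlgebra.lift ℤ ℤ C2 1

/-- The integers `ℤ`, regarded as a trivial `C₂`-module, i.e. as a module over the
integral group ring `ℤ[C₂]` via the augmentation. -/
def TrivialZ : Type := ℤ

instance : AddCommGroup TrivialZ := inferInstanceAs (AddCommGroup ℤ)

instance : Module ℤ TrivialZ := inferInstanceAs (Module ℤ ℤ)

instance : Module ZC2 TrivialZ := Module.compHom TrivialZ augmentation.toRingHom

/-- Group homology `H_n(C₂, ℤ)` of the cyclic group of order two with coefficients in the
trivial module `ℤ`, defined as `Tor_n` over the integral group ring `ℤ[C₂]`. -/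
def groupHomologyC2Z (n : ℕ) : ModuleCat ZC2 :=
  ((Tor (ModuleCat ZC2) n).obj (ModuleCat.of ZC2 TrivialZ)).obj
    (ModuleCat.of ZC2 TrivialZ)

namespace C2Res
open MonoidalCategory
def σ : C2 := Multiplicative.ofAdd (1 : ZMod 2)
def gg : ZC2 := MonoidAlgebra.single σ 1
lemma one_def : (1 : ZC2) = MonoidAlgebra.single (1 : C2) 1 := rfl
lemma gg_mul_gg : gg * gg = 1 := by
  rw [gg, MonoidAlgebra.single_mul_single, mul_one, one_def, show σ * σ = 1 by decide]
lemma elem_cases (c : C2) : c = 1 ∨ c = σ := by revert c; decide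
lemma decomp (x : ZC2) :
    x = MonoidAlgebra.single (1 : C2) (x.coeff 1) + MonoidAlgebra.single σ (x.coeff σ) := by
  ext c
  rcases elem_cases c with rfl | rfl
  · rw [MonoidAlgebra.coeff_add, Finsupp.add_apply]
    simp [MonoidAlgebra.single_apply, show ¬ σ = (1:C2) by decide]
  · rw [MonoidAlgebra.coeff_add, Finsupp.add_apply]
    simp [MonoidAlgebra.single_apply, show ¬ (1 : C2) = σ by decide]
lemma aug_single (c : C2) (r : ℤ) : augmentation (MonoidAlgebra.single c r) = r := by
  simp [augmentation]
lemma smul_def (r : ZC2) (x : TrivialZ) : r • x = (augmentation r) • x := rfl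
lemma single_mul_gg (c : C2) (r : ℤ) :
    MonoidAlgebra.single c r * gg = MonoidAlgebra.single (c * σ) r := by
  rw [gg, MonoidAlgebra.single_mul_single, mul_one]

lemma mul_gg (x : ZC2) :
    x * gg = MonoidAlgebra.single (1:C2) (x.coeff σ) + MonoidAlgebra.single σ (x.coeff 1) := by
  conv_lhs => rw [decomp x]
  rw [add_mul, single_mul_gg, single_mul_gg, one_mul, show σ * σ = 1 by decide, add_comm]

lemma aug_eq (x : ZC2) : augmentation x = x.coeff 1 + x.coeff σ := by
  conv_lhs => rw [decomp x]
  rw [map_add, aug_single, aug_single]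

lemma aug_gg : augmentation gg = 1 := aug_single _ _
lemma aug_one : augmentation (1 : ZC2) = 1 := map_one _

lemma exists_of_sum_zero (x : ZC2) (h : x.coeff 1 + x.coeff σ = 0) : ∃ y, y * (gg - 1) = x := by
  refine ⟨MonoidAlgebra.single (1:C2) (-(x.coeff 1)), ?_⟩
  rw [mul_sub, single_mul_gg, one_mul, mul_one]
  conv_rhs => rw [decomp x]
  rw [show x.coeff σ = -(x.coeff 1) by linarith]
  ext c
  rcases elem_cases c with rfl | rfl <;>
  · rw [MonoidAlgebra.coeff_sub, MonoidAlgebra.coeff_add, Finsupp.sub_apply, Finsupp.add_apply]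
    simp [MonoidAlgebra.single_apply, show ¬ σ = (1:C2) by decide,
      show ¬ (1:C2) = σ by decide]

lemma ker_norm (x : ZC2) (h : x * (1 + gg) = 0) : ∃ y, y * (gg - 1) = x := by
  apply exists_of_sum_zero
  have h1 := congrArg (fun z : ZC2 => z.coeff (1:C2)) h
  simp only [mul_add, mul_one, mul_gg] at h1
  rw [show ∀ u v : ZC2, (u+v).coeff (1:C2) = u.coeff 1 + v.coeff 1 from fun u v => Finsupp.add_apply u.coeff v.coeff 1,
    show ∀ u v : ZC2, (u+v).coeff (1:C2) = u.coeff 1 + v.coeff 1 from fun u v => Finsupp.add_apply u.coeff v.coeff 1] at h1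
  simpa [MonoidAlgebra.single_apply, show ¬ σ = (1:C2) by decide] using h1

lemma ker_aug (x : ZC2) (h : augmentation x = 0) : ∃ y, y * (gg - 1) = x := by
  apply exists_of_sum_zero; rw [← aug_eq]; exact h

lemma ker_gsub (x : ZC2) (h : x * (gg - 1) = 0) : ∃ y, y * (1 + gg) = x := by
  have h1 := congrArg (fun z : ZC2 => z.coeff σ) h
  simp only [mul_sub, mul_one, mul_gg] at h1
  rw [show ∀ u v : ZC2, (u-v).coeff σ = u.coeff σ - v.coeff σ from fun u v => Finsupp.sub_apply u.coeff v.coeff σ,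
    show ∀ u v : ZC2, (u+v).coeff σ = u.coeff σ + v.coeff σ from fun u v => Finsupp.add_apply u.coeff v.coeff σ] at h1
  have hab : x.coeff 1 = x.coeff σ := by
    simpa [MonoidAlgebra.single_apply, show ¬ (1:C2) = σ by decide] using sub_eq_zero.mp h1
  refine ⟨MonoidAlgebra.single (1:C2) (x.coeff 1), ?_⟩
  rw [mul_add, mul_one, single_mul_gg, one_mul]
  conv_rhs => rw [decomp x]
  rw [hab]


def dElt (n : ℕ) : ZC2 := if Even n then gg - 1 else 1 + gg

lemma dElt_mul_dElt (n : ℕ) : dElt n * dElt (n + 1) = 0 := by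
  have h1 : (gg - 1) * (1 + gg) = 0 := by linear_combination gg_mul_gg
  have h2 : (1 + gg) * (gg - 1) = 0 := by linear_combination gg_mul_gg
  rcases Nat.even_or_odd n with he | ho
  · rw [dElt, dElt, if_pos he, if_neg (by simpa [Nat.even_add_one] using he)]
    exact h1
  · rw [dElt, dElt, if_neg (by simpa using (Nat.not_even_iff_odd.2 ho)), if_pos (by
      simpa [Nat.even_add_one] using (Nat.not_even_iff_odd.2 ho))]
    exact h2

def mulMap (r : ZC2) : ModuleCat.of ZC2 ZC2 ⟶ ModuleCat.of ZC2 ZC2 :=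
  ModuleCat.ofHom (LinearMap.lsmul ZC2 ZC2 r)

@[simp] lemma mulMap_apply (r x : ZC2) : mulMap r x = r * x := rfl

def resC : ChainComplex (ModuleCat ZC2) ℕ :=
  ChainComplex.of (fun _ => ModuleCat.of ZC2 ZC2) (fun n => mulMap (dElt n))
    (fun n => by
      refine ModuleCat.hom_ext (LinearMap.ext fun x => ?_)
      show mulMap (dElt n) (mulMap (dElt (n+1)) x) = 0
      rw [mulMap_apply, mulMap_apply, ← mul_assoc, dElt_mul_dElt, zero_mul])

@[simp] lemma resC_d (n : ℕ) : resC.d (n+1) n = mulMap (dElt n) :=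
  ChainComplex.of_d (fun _ => ModuleCat.of ZC2 ZC2) (fun n => mulMap (dElt n)) n

instance (n : ℕ) : CategoryTheory.Projective (resC.X n) :=
  ModuleCat.projective_of_free (M := ModuleCat.of ZC2 ZC2) (Module.Basis.singleton PUnit.{1} ZC2)

def εhom : ModuleCat.of ZC2 ZC2 ⟶ ModuleCat.of ZC2 TrivialZ := ModuleCat.ofHom {
  toFun x := (augmentation x : TrivialZ)
  map_add' x y := map_add _ x y
  map_smul' r x := map_mul augmentation r x }

@[simp] lemma εhom_apply (x : ZC2) : εhom x = (augmentation x : TrivialZ) := rfl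

lemma exactAt_succ (n : ℕ) : resC.ExactAt (n + 1) := by
  rw [HomologicalComplex.exactAt_iff' _ (n + 2) (n + 1) n (by simp) (by simp)]
  rw [ShortComplex.moduleCat_exact_iff]
  intro (x : ZC2) hx
  have hx' : dElt n * x = 0 := by
    have h := hx; simp at h; exact h
  rcases Nat.even_or_odd n with he | ho
  · have he' : dElt n = gg - 1 := if_pos he
    have he2 : dElt (n+1) = 1 + gg := if_neg (by simpa [Nat.even_add_one] using he)
    obtain ⟨y, hy⟩ := ker_gsub x (by rw [mul_comm, ← he', hx'])
    refine ⟨y, ?_⟩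
    show resC.d (n+2) (n+1) y = x
    rw [resC_d]
    show dElt (n+1) * y = x
    rw [he2, mul_comm]
    exact hy
  · have he' : dElt n = 1 + gg := if_neg (by simpa using (Nat.not_even_iff_odd.2 ho))
    have he2 : dElt (n+1) = gg - 1 := if_pos (by simpa [Nat.even_add_one] using (Nat.not_even_iff_odd.2 ho))
    obtain ⟨y, hy⟩ := ker_norm x (by rw [mul_comm, ← he', hx'])
    refine ⟨y, ?_⟩
    show resC.d (n+2) (n+1) y = x
    rw [resC_d]
    show dElt (n+1) * y = x
    rw [he2, mul_comm]
    exact hy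

def res : ProjectiveResolution (ModuleCat.of ZC2 TrivialZ) where
  complex := resC
  π := (ChainComplex.toSingle₀Equiv _ _).symm ⟨εhom, by
    refine ModuleCat.hom_ext (LinearMap.ext fun (x : ZC2) => ?_)
    show εhom (resC.d 1 0 x) = 0
    rw [resC_d]
    show (augmentation ((dElt 0) * x) : ℤ) = 0
    rw [map_mul, dElt, if_pos (Even.zero), map_sub, aug_gg, aug_one, sub_self, zero_mul]⟩
  quasiIso := ⟨fun n => by
    cases n with
    | zero =>
      rw [ChainComplex.quasiIsoAt₀_iff, ShortComplex.quasiIso_iff_of_zeros']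
      rotate_left
      · exact resC.shape 0 0 (by simp)
      · rfl
      · rfl
      constructor
      · rw [ShortComplex.moduleCat_exact_iff]
        intro (x : ZC2) hx
        have hx' : augmentation x = 0 := by
          exact hx
        obtain ⟨y, hy⟩ := ker_aug x hx'
        refine ⟨y, ?_⟩
        show resC.d 1 0 y = x
        rw [resC_d]
        show dElt 0 * y = x
        rw [dElt, if_pos Even.zero, mul_comm]
        exact hy
      · rw [ModuleCat.epi_iff_surjective]
        intro (z : TrivialZ)
        refine ⟨MonoidAlgebra.single (1 : C2) z, ?_⟩
        show εhom (MonoidAlgebra.single (1 : C2) z) = z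
        rw [εhom_apply]; exact aug_single _ _
    | succ n =>
      rw [quasiIsoAt_iff_exactAt' _ _ (ChainComplex.exactAt_succ_single_obj _ n)]
      exact exactAt_succ n⟩


instance : NoZeroSMulDivisors ℤ TrivialZ := inferInstanceAs (NoZeroSMulDivisors ℤ ℤ)

abbrev Mz : ModuleCat ZC2 := ModuleCat.of ZC2 TrivialZ

def smulMap (r : ZC2) : Mz ⟶ Mz := ModuleCat.ofHom (LinearMap.lsmul ZC2 TrivialZ r)

@[simp] lemma smulMap_apply (r : ZC2) (x : TrivialZ) : smulMap r x = r • x := rfl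

lemma gsub_smul (x : TrivialZ) : (gg - 1 : ZC2) • x = 0 := by
  rw [smul_def, map_sub, aug_gg, aug_one, sub_self, zero_smul]

lemma normElt_smul (x : TrivialZ) : ((1 : ZC2) + gg) • x = (2 : ℤ) • x := by
  rw [smul_def, map_add, aug_gg, aug_one]
  norm_num

def T : ChainComplex (ModuleCat ZC2) ℕ :=
  ChainComplex.of (fun _ => Mz) (fun n => smulMap (dElt n))
    (fun n => by
      ext x
      show smulMap (dElt n) (smulMap (dElt (n+1)) x) = 0
      rw [smulMap_apply, smulMap_apply, smul_smul, dElt_mul_dElt, zero_smul])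

@[simp] lemma T_d (n : ℕ) : T.d (n+1) n = smulMap (dElt n) :=
  ChainComplex.of_d (fun _ => Mz) (fun n => smulMap (dElt n)) n

abbrev F : ModuleCat ZC2 ⥤ ModuleCat ZC2 :=
  (MonoidalCategory.tensoringLeft (ModuleCat ZC2)).obj Mz

def QtoT : (F.mapHomologicalComplex _).obj res.complex ≅ T :=
  HomologicalComplex.Hom.isoOfComponents
    (fun i => MonoidalCategory.rightUnitor Mz)
    (by
      rintro i j (hij : j + 1 = i)
      subst hij
      refine ModuleCat.hom_ext (TensorProduct.ext' ?_)
      intro (m : TrivialZ) (x : ZC2)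
      show T.d (j+1) j ((MonoidalCategory.rightUnitor Mz).hom (m ⊗ₜ x)) =
        (MonoidalCategory.rightUnitor Mz).hom
          ((F.map (resC.d (j+1) j)) (m ⊗ₜ x))
      rw [resC_d, T_d]
      rw [ModuleCat.MonoidalCategory.rightUnitor_hom_apply]
      show dElt j • (x • m) =
        (MonoidalCategory.rightUnitor Mz).hom ((Mz ◁ mulMap (dElt j)) (m ⊗ₜ x))
      rw [ModuleCat.MonoidalCategory.whiskerLeft_apply,
        ModuleCat.MonoidalCategory.rightUnitor_hom_apply]
      show dElt j • (x • m) = (dElt j * x) • m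
      rw [mul_smul])


end C2Res

namespace C2Res

def mainIso (n : ℕ) : groupHomologyC2Z n ≅ T.homology n :=
  res.isoLeftDerivedObj F n ≪≫
    (HomologicalComplex.homologyFunctor (ModuleCat ZC2) _ n).mapIso QtoT

lemma T_exactAt (m : ℕ) (hm : Even m) : T.ExactAt (m + 2) := by
  rw [HomologicalComplex.exactAt_iff' _ (m+3) (m+2) (m+1) (by simp) (by simp)]
  rw [ShortComplex.moduleCat_exact_iff]
  intro (x : TrivialZ) hx
  have hx1 : T.d (m+2) (m+1) x = 0 := hx
  rw [T_d] at hx1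
  have hx2 : dElt (m+1) • x = 0 := hx1
  rw [dElt, if_neg (by simpa [Nat.even_add_one] using hm), normElt_smul] at hx2
  have hx0 : x = 0 := by
    rcases smul_eq_zero.mp hx2 with h | h
    · norm_num at h
    · exact h
  exact ⟨0, by rw [map_zero, hx0]; rfl⟩

lemma subsingleton_even (m : ℕ) (hm : Even m) :
    Subsingleton (groupHomologyC2Z (m+2)) := by
  have h1 : Limits.IsZero (T.homology (m+2)) := by
    rw [← HomologicalComplex.exactAt_iff_isZero_homology]
    exact T_exactAt m hm
  have h2 : Limits.IsZero (groupHomologyC2Z (m+2)) := h1.of_iso (mainIso (m+2))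
  have h0 : (𝟙 (groupHomologyC2Z (m+2)) : _ ⟶ _) = 0 := h2.eq_of_src _ _
  refine ⟨fun a b => ?_⟩
  calc a = (𝟙 (groupHomologyC2Z (m+2)) : _ ⟶ _) a := rfl
    _ = (0 : groupHomologyC2Z (m+2) ⟶ groupHomologyC2Z (m+2)) a := by rw [h0]
    _ = (0 : groupHomologyC2Z (m+2) ⟶ groupHomologyC2Z (m+2)) b := rfl
    _ = (𝟙 (groupHomologyC2Z (m+2)) : _ ⟶ _) b := by rw [h0]
    _ = b := rfl

lemma odd_equiv (m : ℕ) (hm : Even m) :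
    Nonempty (groupHomologyC2Z (m+1) ≃+ ZMod 2) := by
  let S : ShortComplex (ModuleCat ZC2) := T.sc' (m+2) (m+1) m
  have e1 : groupHomologyC2Z (m+1) ≅ S.homology :=
    mainIso (m+1) ≪≫ T.homologyIsoSc' (m+2) (m+1) m (by simp) (by simp)
  have e2 : S.homology ≅ S.moduleCatLeftHomologyData.H := S.moduleCatHomologyIso
  have hg : ∀ x : TrivialZ, S.g x = 0 := by
    intro x
    have h1 : S.g x = T.d (m+1) m x := rfl
    rw [h1, T_d]
    show dElt m • x = 0
    rw [dElt, if_pos hm, gsub_smul]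
  have hf : ∀ y : TrivialZ, S.f y = (2 : ℤ) • y := by
    intro y
    have h1 : S.f y = T.d (m+2) (m+1) y := rfl
    rw [h1, T_d]
    show dElt (m+1) • y = (2 : ℤ) • y
    rw [dElt, if_neg (by simpa [Nat.even_add_one] using hm), normElt_smul]
  letI : Module ZC2 (ZMod 2) :=
    Module.compHom (ZMod 2) ((Int.castRingHom (ZMod 2)).comp augmentation.toRingHom)
  let φ : LinearMap.ker S.g.hom →ₗ[ZC2] ZMod 2 :=
    { toFun := fun p => (((show ℤ from p.1) : ℤ) : ZMod 2)
      map_add' := fun p q => Int.cast_add (show ℤ from p.1) (show ℤ from q.1)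
      map_smul' := fun r p => Int.cast_mul (augmentation r) (show ℤ from p.1) }
  have hle : LinearMap.range S.moduleCatToCycles ≤ LinearMap.ker φ := by
    rintro p ⟨a, rfl⟩
    show (((show ℤ from (S.moduleCatToCycles a).1) : ℤ) : ZMod 2) = 0
    have h1 : (S.moduleCatToCycles a).1 = S.f a := rfl
    have h2 : (show ℤ from (S.moduleCatToCycles a).1) = 2 * (show ℤ from (a : TrivialZ)) := by
      rw [h1, hf a]
      rfl
    rw [h2]
    exact (ZMod.intCast_zmod_eq_zero_iff_dvd _ 2).mpr ⟨_, rfl⟩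
  let ψ := Submodule.liftQ (LinearMap.range S.moduleCatToCycles) φ hle
  have hsurj : Function.Surjective ψ := by
    intro z
    obtain ⟨k, rfl⟩ := ZMod.intCast_surjective z
    refine ⟨Submodule.Quotient.mk ⟨(k : TrivialZ), LinearMap.mem_ker.mpr (hg _)⟩, ?_⟩
    rw [Submodule.liftQ_apply]
    rfl
  have hinj : Function.Injective ψ := by
    rw [← LinearMap.ker_eq_bot]
    apply Submodule.ker_liftQ_eq_bot
    rintro ⟨(p : TrivialZ), hp⟩ hker
    have h1 : ((show ℤ from p) : ZMod 2) = 0 := hker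
    obtain ⟨k, hk⟩ := (ZMod.intCast_zmod_eq_zero_iff_dvd _ 2).mp h1
    refine ⟨(k : TrivialZ), ?_⟩
    apply Subtype.ext
    show S.f (k : TrivialZ) = p
    refine (hf k).trans ?_
    show (2 : ℤ) * k = p
    omega
  exact ⟨((e1 ≪≫ e2).toLinearEquiv.toAddEquiv).trans
    (AddEquiv.ofBijective ψ.toAddMonoidHom ⟨hinj, hsurj⟩)⟩

end C2Res

/-- For every odd natural number `n ≥ 1`, the group homology `H_n(C₂, ℤ)` is isomorphic to
`ℤ/2`, and for every even natural number `n ≥ 2`, the group homology `H_n(C₂, ℤ)` is the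
zero group. -/
theorem groupHomology_C2_Z :
    (∀ n : ℕ, 1 ≤ n → Odd n → Nonempty ((groupHomologyC2Z n) ≃+ ZMod 2)) ∧
      (∀ n : ℕ, 2 ≤ n → Even n → Subsingleton (groupHomologyC2Z n)) := by
  constructor
  · intro n hn hodd
    obtain ⟨j, hj⟩ := hodd
    obtain ⟨m, rfl⟩ : ∃ m, n = m + 1 := ⟨n - 1, by omega⟩
    exact C2Res.odd_equiv m ⟨j, by omega⟩
  · intro n hn heven
    obtain ⟨j, hj⟩ := heven
    obtain ⟨m, rfl⟩ : ∃ m, n = m + 2 := ⟨n - 2, by omega⟩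
    exact C2Res.subsingleton_even m ⟨j - 1, by omega⟩


end
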